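/- Let f be a binary sequence whose only square factors are 00, 11 and 0101, and let g be obtained from f by replacing every occurrence of the factor 10 by 12220 (over the alphabet {0,1,2}). Then g contains no square factor XX with |X| ≥ 2. -/

import Mathlib

def IsFactor {α : Type*} (u : List α) (w : ℕ → α) : Prop :=
  ∃ i, u = (List.range u.length).map fun j => w (i + j)

/-- The block of `g` produced at position `n` of `f`: the occurrence `10` is
replaced by `12220`, i.e. `222` is inserted between a `1` and a following `0`. -/
def block (f : ℕ → Fin 2) (n : ℕ) : List (Fin 3) :=
  if f n = 1 ∧ f (n + 1) = 0 then [1, 2, 2, 2] else [(f n).castLE (by norm_num)]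

/-- Prefixes of the word `g` obtained from `f` by replacing each factor `10` by `12220`. -/
def gPrefix (f : ℕ → Fin 2) (n : ℕ) : List (Fin 3) :=
  ((List.range n).map (block f)).flatten

namespace SqAux

def g2 : Fin 2 → Fin 3 := Fin.castLE (by norm_num)

variable (f : ℕ → Fin 2)

lemma block_cases (n : ℕ) :
    (block f n = [1,2,2,2] ∧ f n = 1 ∧ f (n+1) = 0) ∨
    (block f n = [g2 (f n)] ∧ ¬ (f n = 1 ∧ f (n+1) = 0)) := by
  unfold block
  split <;> simp_all [g2]

lemma gPrefix_succ (n : ℕ) : gPrefix f (n+1) = gPrefix f n ++ block f n := by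
  simp [gPrefix, List.range_succ]

lemma gPrefix_prefix {m n : ℕ} (h : m ≤ n) : gPrefix f m <+: gPrefix f n := by
  induction n with
  | zero => simpa using (by omega : m = 0) ▸ List.prefix_refl _
  | succ n ih =>
    rcases Nat.lt_or_ge m (n+1) with h' | h'
    · exact (ih (by omega)).trans (by rw [gPrefix_succ]; exact List.prefix_append _ _)
    · have : m = n+1 := by omega
      subst this; exact List.prefix_refl _

def pos (n : ℕ) : ℕ := (gPrefix f n).length

def G (m : ℕ) : Fin 3 := (gPrefix f (m+1)).getD m 0

lemma block_len_pos (n : ℕ) : 0 < (block f n).length := by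
  rcases block_cases f n with ⟨h, -⟩ | ⟨h, -⟩ <;> simp [h]

lemma pos_succ (n : ℕ) : pos f (n+1) = pos f n + (block f n).length := by
  simp [pos, gPrefix_succ]

lemma pos_zero : pos f 0 = 0 := by simp [pos, gPrefix]

lemma le_pos (n : ℕ) : n ≤ pos f n := by
  induction n with
  | zero => simp [pos_zero]
  | succ n ih => have := block_len_pos f n; rw [pos_succ]; omega

lemma getD_gPrefix {m n : ℕ} (h : m < pos f n) (d : Fin 3) :
    (gPrefix f n).getD m d = G f m := by
  have h1 : m < pos f (m+1) := lt_of_lt_of_le (Nat.lt_succ_self m) (le_pos f (m+1))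
  rcases Nat.le_total n (m+1) with hle | hle
  · obtain ⟨t, ht⟩ := gPrefix_prefix f hle
    rw [G, ← ht, List.getD_append _ _ _ _ h,
      List.getD_eq_getElem _ _ h, List.getD_eq_getElem _ _ h]
  · obtain ⟨t, ht⟩ := gPrefix_prefix f hle
    rw [G, ← ht, List.getD_append _ _ _ _ h1,
      List.getD_eq_getElem _ _ h1, List.getD_eq_getElem _ _ h1]

lemma G_block {n j : ℕ} (hj : j < (block f n).length) :
    G f (pos f n + j) = (block f n).getD j 0 := by
  have h : pos f n + j < pos f (n+1) := by rw [pos_succ]; omega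
  rw [← getD_gPrefix f h 0, gPrefix_succ,
    List.getD_append_right _ _ _ _ (by simp only [pos]; omega)]
  congr 1
  simp only [pos]
  omega

lemma exists_block (m : ℕ) : ∃ n j, j < (block f n).length ∧ m = pos f n + j := by
  induction m with
  | zero => exact ⟨0, 0, block_len_pos f 0, by simp [pos_zero]⟩
  | succ m ih =>
    obtain ⟨n, j, hj, hm⟩ := ih
    rcases Nat.lt_or_ge (j+1) (block f n).length with h | h
    · exact ⟨n, j+1, h, by omega⟩
    · refine ⟨n+1, 0, block_len_pos f (n+1), ?_⟩
      rw [pos_succ]; omega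

end SqAux

namespace SqAux2
open SqAux
variable (f : ℕ → Fin 2)

lemma g2_ne_two (a : Fin 2) : g2 a ≠ 2 := by fin_cases a <;> decide

lemma pos_strictMono : StrictMono (pos f) :=
  strictMono_nat_of_lt_succ (fun n => by have := block_len_pos f n; rw [pos_succ]; omega)

lemma G_pos (n : ℕ) : G f (pos f n) = g2 (f n) := by
  have h := G_block f (show 0 < (block f n).length from block_len_pos f n)
  rcases block_cases f n with ⟨hb, h1, h0⟩ | ⟨hb, -⟩
  · rw [hb] at h; rw [h1, show g2 1 = 1 by decide]; simpa using h
  · rw [hb] at h; simpa using h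

lemma two_elim {m : ℕ} (h : G f m = 2) :
    ∃ n j, (j = 1 ∨ j = 2 ∨ j = 3) ∧ m = pos f n + j ∧ block f n = [1,2,2,2] ∧
      f n = 1 ∧ f (n+1) = 0 := by
  obtain ⟨n, j, hj, rfl⟩ := exists_block f m
  have hG := G_block f hj
  rcases block_cases f n with ⟨hb, h1, h0⟩ | ⟨hb, -⟩
  · refine ⟨n, j, ?_, rfl, hb, h1, h0⟩
    rw [hb] at hj hG
    simp at hj
    interval_cases j <;> simp_all
  · rw [hb] at hj hG
    simp at hj
    subst hj
    rw [h] at hG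
    have : g2 (f n) = 2 := by simpa using hG.symm
    exact absurd this (g2_ne_two _)

lemma blocks14 {j : ℕ} (hj : j < 4) :
    ([1,2,2,2] : List (Fin 3)).getD j 0 = if j = 0 then 1 else 2 := by
  interval_cases j <;> rfl

lemma run_full {i : ℕ} (h1 : G f i = 1) (h2 : G f (i+1) = 2) :
    ∃ n, pos f n = i ∧ f n = 1 ∧ f (n+1) = 0 ∧
      G f (i+2) = 2 ∧ G f (i+3) = 2 ∧ G f (i+4) = 0 ∧
      pos f (n+2) = i + 5 ∧ G f (i+5) = g2 (f (n+2)) := by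
  obtain ⟨n, j, hj, hm, hb, hf1, hf0⟩ := two_elim f h2
  have hone : ∀ j' < 4, G f (pos f n + j') = if j' = 0 then 1 else 2 := by
    intro j' hj'
    rw [← blocks14 hj', ← hb]
    exact G_block f (by rw [hb]; simpa using hj')
  rcases hj with rfl | rfl | rfl
  · have hpn : pos f n = i := by omega
    have hb1 : block f (n+1) = [g2 (f (n+1))] := by
      rcases block_cases f (n+1) with ⟨-, hx, -⟩ | ⟨hx, -⟩
      · rw [hf0] at hx; exact absurd hx (by decide)
      · exact hx
    have hp1 : pos f (n+1) = i + 4 := by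
      rw [pos_succ, hb, hpn]; rfl
    have hp2 : pos f (n+2) = i + 5 := by
      rw [pos_succ, hb1, hp1]; rfl
    refine ⟨n, hpn, hf1, hf0, ?_, ?_, ?_, hp2, ?_⟩
    · have := hone 2 (by omega); rw [hpn] at this; simpa using this
    · have := hone 3 (by omega); rw [hpn] at this; simpa using this
    · have := G_pos f (n+1); rw [hp1, hf0, show g2 0 = 0 by decide] at this; simpa using this
    · have := G_pos f (n+2); rw [hp2] at this; exact this
  · have := hone 1 (by omega)
    rw [show pos f n + 1 = i by omega] at this
    rw [h1] at this; exact absurd this.symm (by decide)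
  · have := hone 2 (by omega)
    rw [show pos f n + 2 = i by omega] at this
    rw [h1] at this; exact absurd this.symm (by decide)

lemma prev_letter {n m : ℕ} (h : pos f n = m + 1) :
    ∃ t, n = t + 1 ∧
      ((block f t = [1,2,2,2] ∧ G f m = 2 ∧ f t = 1 ∧ f (t+1) = 0) ∨
       (block f t = [g2 (f t)] ∧ G f m = g2 (f t) ∧ pos f t = m)) := by
  have hn : n ≠ 0 := by intro h0; rw [h0, pos_zero] at h; omega
  obtain ⟨t, rfl⟩ := Nat.exists_eq_succ_of_ne_zero hn
  refine ⟨t, rfl, ?_⟩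
  have hps : pos f t + (block f t).length = m + 1 := by rw [← pos_succ, h]
  rcases block_cases f t with ⟨hb, h1, h0⟩ | ⟨hb, -⟩
  · left
    refine ⟨hb, ?_, h1, h0⟩
    have hlen : (block f t).length = 4 := by rw [hb]; rfl
    have hm : m = pos f t + 3 := by omega
    have := G_block f (show 3 < (block f t).length by omega)
    rw [← hm, hb] at this
    simpa using this
  · right
    have hlen : (block f t).length = 1 := by rw [hb]; rfl
    have hm : pos f t = m := by omega
    have := G_block f (show 0 < (block f t).length by omega)
    rw [hb] at this
    simp at this
    rw [hm] at this
    exact ⟨hb, this, hm⟩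

end SqAux2

namespace SqAux3
open SqAux SqAux2
variable (f : ℕ → Fin 2)

lemma fin2 (a : Fin 2) : a = 0 ∨ a = 1 := by omega

lemma g2_eq_one {a : Fin 2} (h : g2 a = 1) : a = 1 := by
  rcases fin2 a with rfl | rfl
  · exact absurd h (by decide)
  · rfl

lemma g2_eq_zero {a : Fin 2} (h : g2 a = 0) : a = 0 := by
  rcases fin2 a with rfl | rfl
  · rfl
  · exact absurd h (by decide)

lemma block_single {n : ℕ} (h : ¬ (f n = 1 ∧ f (n+1) = 0)) :
    block f n = [g2 (f n)] := by
  rcases block_cases f n with ⟨-, h1, h0⟩ | ⟨hb, -⟩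
  · exact absurd ⟨h1, h0⟩ h
  · exact hb

lemma G_run {n : ℕ} (hb : block f n = [1,2,2,2]) :
    G f (pos f n) = 1 ∧ G f (pos f n + 1) = 2 ∧ G f (pos f n + 2) = 2 ∧
      G f (pos f n + 3) = 2 ∧ pos f (n+1) = pos f n + 4 := by
  have h4 : (block f n).length = 4 := by rw [hb]; rfl
  have g0 := G_block f (show 0 < (block f n).length by omega)
  have g1 := G_block f (show 1 < (block f n).length by omega)
  have g2' := G_block f (show 2 < (block f n).length by omega)
  have g3 := G_block f (show 3 < (block f n).length by omega)
  rw [hb] at g0 g1 g2' g3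
  simp at g0
  exact ⟨g0, g1, g2', g3, by rw [pos_succ]; omega⟩

lemma f_square {s : ℕ}
    (hsq : ∀ X : List (Fin 2), X ≠ [] → IsFactor (X ++ X) f →
      X = [0] ∨ X = [1] ∨ X = [0, 1])
    (h1 : f s = 1) (h2 : f (s+1) = 0) (h3 : f (s+2) = 1) (h4 : f (s+3) = 0) : False := by
  have hf : IsFactor (([1,0] ++ [1,0] : List (Fin 2))) f := by
    refine ⟨s, ?_⟩
    have : (([1,0] ++ [1,0] : List (Fin 2))).length = 4 := rfl
    rw [this]
    have : List.range 4 = [0,1,2,3] := rfl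
    rw [this]
    simp [h1, h2, h3, h4]
  rcases hsq [1,0] (by simp) hf with h | h | h <;> exact absurd h (by decide)

lemma no_10 {i : ℕ} (h1 : G f i = 1) (h0 : G f (i+1) = 0) : False := by
  obtain ⟨n, j, hj, rfl⟩ := exists_block f i
  have hG := G_block f hj
  rcases block_cases f n with ⟨hb, hf1, hf0⟩ | ⟨hb, hnb⟩
  · have h4 : (block f n).length = 4 := by rw [hb]; rfl
    rw [hb] at hG
    rw [blocks14 (by omega)] at hG
    have hj0 : j = 0 := by
      by_contra hne
      rw [if_neg hne, h1] at hG
      exact absurd hG (by decide)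
    subst hj0
    obtain ⟨-, g1, -, -, -⟩ := G_run f hb
    rw [show pos f n + 0 + 1 = pos f n + 1 by omega, g1] at h0
    exact absurd h0 (by decide)
  · have h4 : (block f n).length = 1 := by rw [hb]; rfl
    have hj0 : j = 0 := by omega
    subst hj0
    rw [hb] at hG
    simp at hG
    simp only [Nat.add_zero] at h1 h0
    rw [h1] at hG
    have hfn : f n = 1 := g2_eq_one hG.symm
    have hfn1 : f (n+1) = 1 := by
      rcases fin2 (f (n+1)) with h | h
      · exact absurd ⟨hfn, h⟩ hnb
      · exact h
    have hp1 : pos f (n+1) = pos f n + 1 := by rw [pos_succ]; omega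
    have := G_pos f (n+1)
    rw [hp1, hfn1] at this
    rw [h0] at this
    exact absurd this.symm (by decide)

lemma no_21 {i : ℕ} (h2 : G f i = 2) (h1 : G f (i+1) = 1) : False := by
  obtain ⟨n, j, hj, hm, hb, -, hf0⟩ := two_elim f h2
  obtain ⟨-, -, g2', g3, hp1⟩ := G_run f hb
  rcases hj with rfl | rfl | rfl
  · rw [show i + 1 = pos f n + 2 by omega, g2'] at h1
    exact absurd h1 (by decide)
  · rw [show i + 1 = pos f n + 3 by omega, g3] at h1
    exact absurd h1 (by decide)
  · have := G_pos f (n+1)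
    rw [hp1, hf0] at this
    rw [show i + 1 = pos f n + 4 by omega, this] at h1
    exact absurd h1 (by decide)

lemma no_02 {i : ℕ} (h0 : G f i = 0) (h2 : G f (i+1) = 2) : False := by
  obtain ⟨n, j, hj, hm, hb, hf1, -⟩ := two_elim f h2
  obtain ⟨g0, g1, g2', -, -⟩ := G_run f hb
  rcases hj with rfl | rfl | rfl
  · rw [show i = pos f n by omega, g0] at h0
    exact absurd h0 (by decide)
  · rw [show i = pos f n + 1 by omega, g1] at h0
    exact absurd h0 (by decide)
  · rw [show i = pos f n + 2 by omega, g2'] at h0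
    exact absurd h0 (by decide)

lemma no_2222 {i : ℕ} (h0 : G f i = 2) (h1 : G f (i+1) = 2)
    (h2 : G f (i+2) = 2) (h3 : G f (i+3) = 2) : False := by
  obtain ⟨n, j, hj, hm, hb, -, hf0⟩ := two_elim f h0
  obtain ⟨-, -, -, -, hp1⟩ := G_run f hb
  have hz := G_pos f (n+1)
  rw [hp1, hf0] at hz
  rcases hj with rfl | rfl | rfl
  · rw [show pos f n + 4 = i + 3 by omega, h3] at hz
    exact absurd hz.symm (by decide)
  · rw [show pos f n + 4 = i + 2 by omega, h2] at hz
    exact absurd hz.symm (by decide)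
  · rw [show pos f n + 4 = i + 1 by omega, h1] at hz
    exact absurd hz.symm (by decide)

lemma no_120 {i : ℕ} (h1 : G f i = 1) (h2 : G f (i+1) = 2) (h0 : G f (i+2) = 0) :
    False := by
  obtain ⟨n, -, -, -, g2', -, -, -, -⟩ := run_full f h1 h2
  rw [h0] at g2'
  exact absurd g2' (by decide)

lemma no_1220 {i : ℕ} (h1 : G f i = 1) (h2 : G f (i+1) = 2) (h2' : G f (i+2) = 2)
    (h0 : G f (i+3) = 0) : False := by
  obtain ⟨n, -, -, -, -, g3, -, -, -⟩ := run_full f h1 h2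
  rw [h0] at g3
  exact absurd g3 (by decide)

lemma no_2012 {i : ℕ}
    (hsq : ∀ X : List (Fin 2), X ≠ [] → IsFactor (X ++ X) f →
      X = [0] ∨ X = [1] ∨ X = [0, 1])
    (h0 : G f i = 2) (h1 : G f (i+1) = 0) (h2 : G f (i+2) = 1) (h3 : G f (i+3) = 2) :
    False := by
  obtain ⟨n, hpn, hfn, hfn1, -, -, -, -, -⟩ :=
    run_full f h2 (by rw [show i + 2 + 1 = i + 3 by omega]; exact h3)
  obtain ⟨t, rfl, ht⟩ := prev_letter f (show pos f n = (i+1) + 1 by omega)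
  rcases ht with ⟨-, hG2, -, -⟩ | ⟨-, hGt, hpt⟩
  · rw [h1] at hG2
    exact absurd hG2 (by decide)
  · rw [h1] at hGt
    have hft : f t = 0 := g2_eq_zero hGt.symm
    obtain ⟨s, rfl, hs⟩ := prev_letter f (show pos f t = i + 1 by omega)
    rcases hs with ⟨-, -, hfs, hfs1⟩ | ⟨-, hGs, -⟩
    · exact f_square f hsq hfs hfs1 hfn hfn1
    · rw [h0] at hGs
      exact absurd hGs.symm (g2_ne_two _)

end SqAux3

namespace SqAux4
open SqAux SqAux2 SqAux3
variable (f : ℕ → Fin 2)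

def pnz : Fin 3 → Bool := fun a => a != 2

lemma pnz_false_iff {a : Fin 3} : ¬ pnz a = true ↔ a = 2 := by
  revert a; decide

lemma filter_block (n : ℕ) : (block f n).filter pnz = [g2 (f n)] := by
  rcases block_cases f n with ⟨hb, h1, -⟩ | ⟨hb, -⟩
  · rw [hb, h1]; decide
  · rw [hb]
    rw [List.filter_cons_of_pos (by rcases fin2 (f n) with h|h <;> rw [h] <;> decide)]
    rfl

lemma filter_gPrefix (n : ℕ) :
    (gPrefix f n).filter pnz = (List.range n).map (fun k => g2 (f k)) := by
  induction n with
  | zero => simp [gPrefix]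
  | succ n ih =>
    rw [gPrefix_succ, List.filter_append, ih, filter_block, List.range_succ,
      List.map_append]
    simp

lemma infix_G {w : List (Fin 3)} {n : ℕ} (h : w <:+: gPrefix f n) :
    ∃ i, ∀ j, j < w.length → w.getD j 0 = G f (i + j) := by
  obtain ⟨s, t, hst⟩ := h
  refine ⟨s.length, fun j hj => ?_⟩
  have hlen : s.length + j < pos f n := by
    have := congrArg List.length hst
    simp at this
    simp only [pos]
    omega
  rw [← getD_gPrefix f hlen 0, ← hst,
    List.getD_append _ _ _ _ (by simp; omega),
    List.getD_append_right _ _ _ _ (by omega)]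
  congr 1
  omega

lemma factor_of_infix {u : List (Fin 2)} {n : ℕ} (h : u <:+: (List.range n).map f) :
    IsFactor u f := by
  obtain ⟨s, t, hst⟩ := h
  refine ⟨s.length, ?_⟩
  apply List.ext_getElem (by simp)
  intro j h1 h2
  simp only [List.getElem_map, List.getElem_range]
  have hj : j < u.length := h1
  have hidx : s.length + j < n := by
    have := congrArg List.length hst
    simp at this
    omega
  have e1 : ∀ d : Fin 2, ((List.range n).map f).getD (s.length + j) d = f (s.length + j) := by
    intro d
    rw [List.getD_eq_getElem _ _ (by simp; omega)]
    simp
  have e2 : ((s ++ u ++ t)).getD (s.length + j) 0 = u.getD j 0 := by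
    rw [List.getD_append _ _ _ _ (by simp; omega),
      List.getD_append_right _ _ _ _ (by omega)]
    congr 1
    omega
  rw [← List.getD_eq_getElem u 0 hj, ← e2, hst, e1]

lemma g2_injective : Function.Injective g2 :=
  Fin.castLE_injective (by norm_num)

lemma reflect {Y : List (Fin 3)} {n : ℕ}
    (h : Y ++ Y <:+: (List.range n).map (fun k => g2 (f k))) :
    ∃ Z : List (Fin 2), Z.map g2 = Y ∧ IsFactor (Z ++ Z) f := by
  obtain ⟨s, t, hst⟩ := h
  have hmap : (List.range n).map (fun k => g2 (f k)) = ((List.range n).map f).map g2 := by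
    simp [List.map_map]
  rw [hmap] at hst
  obtain ⟨l₁, l₂, hL, hs, ht⟩ := List.map_eq_append_iff.mp hst.symm
  obtain ⟨la, lb, hL2, hsa, hYY⟩ := List.map_eq_append_iff.mp hs
  obtain ⟨z₁, z₂, hz, hz1, hz2⟩ := List.map_eq_append_iff.mp hYY
  have hzz : z₁ = z₂ := List.map_injective_iff.mpr g2_injective (hz1.trans hz2.symm)
  subst hzz
  refine ⟨z₁, hz1, factor_of_infix f (n := n) ⟨la, l₂, ?_⟩⟩
  rw [← hz, ← hL2, ← hL]

end SqAux4

namespace SqAux5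
open SqAux SqAux2 SqAux3 SqAux4 List

lemma decomp0 {x : List (Fin 3)} (h : x.filter pnz = []) :
    x = List.replicate x.length 2 := by
  rw [List.eq_replicate_iff]
  exact ⟨rfl, fun b hb => pnz_false_iff.mp (List.filter_eq_nil_iff.mp h b hb)⟩

lemma decomp1 {x : List (Fin 3)} {c : Fin 3} (h : x.filter pnz = [c]) :
    ∃ p q, x = List.replicate p 2 ++ c :: List.replicate q 2 := by
  rw [List.filter_eq_cons_iff] at h
  obtain ⟨l₁, l₂, rfl, h₁, hc, h₂⟩ := h
  refine ⟨l₁.length, l₂.length, ?_⟩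
  have e1 : l₁ = List.replicate l₁.length 2 :=
    List.eq_replicate_iff.mpr ⟨rfl, fun b hb => pnz_false_iff.mp (h₁ b hb)⟩
  rw [← e1, ← decomp0 h₂]

lemma decomp2 {x : List (Fin 3)} (h : x.filter pnz = [0, 1]) :
    ∃ p m q, x = List.replicate p 2 ++ 0 ::
      (List.replicate m 2 ++ 1 :: List.replicate q 2) := by
  rw [List.filter_eq_cons_iff] at h
  obtain ⟨l₁, l₂, rfl, h₁, hc, h₂⟩ := h
  obtain ⟨m, q, rfl⟩ := decomp1 h₂
  refine ⟨l₁.length, m, q, ?_⟩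
  have e1 : l₁ = List.replicate l₁.length 2 :=
    List.eq_replicate_iff.mpr ⟨rfl, fun b hb => pnz_false_iff.mp (h₁ b hb)⟩
  rw [← e1]

lemma combinat {x : List (Fin 3)} (hx : 2 ≤ x.length)
    (hY : x.filter pnz = [] ∨ x.filter pnz = [0] ∨ x.filter pnz = [1] ∨
      x.filter pnz = [0, 1]) :
    [1,0] <:+: x ++ x ∨ [2,1] <:+: x ++ x ∨ [0,2] <:+: x ++ x ∨
    [1,2,0] <:+: x ++ x ∨ [1,2,2,0] <:+: x ++ x ∨ [2,2,2,2] <:+: x ++ x ∨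
    [2,0,1,2] <:+: x ++ x := by
  rcases hY with h | h | h | h
  · -- x is all 2's
    have hrep := decomp0 h
    refine Or.inr (Or.inr (Or.inr (Or.inr (Or.inr (Or.inl ⟨[], replicate (2 * x.length - 4) 2, ?_⟩)))))
    conv_rhs => rw [hrep]
    rw [List.nil_append, show ([2,2,2,2] : List (Fin 3)) = replicate 4 2 by decide,
      ← List.replicate_add, ← List.replicate_add]
    congr 1
    omega
  · -- filter = [0]
    obtain ⟨p, q, rfl⟩ := decomp1 h
    simp at hx
    rcases q with _ | q'
    · -- q = 0, so p ≥ 1 : [0,2] at the junction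
      obtain ⟨p', rfl⟩ : ∃ p', p = p' + 1 := ⟨p - 1, by omega⟩
      refine Or.inr (Or.inr (Or.inl ⟨replicate (p' + 1) 2, replicate p' 2 ++ [0], ?_⟩))
      simp [List.replicate_succ]
    · -- q = q' + 1 : [0,2] inside x
      refine Or.inr (Or.inr (Or.inl (List.IsInfix.trans
        ⟨replicate p 2, replicate q' 2, ?_⟩ (List.prefix_append _ _).isInfix)))
      simp [List.replicate_succ]
  · -- filter = [1]
    obtain ⟨p, q, rfl⟩ := decomp1 h
    simp at hx
    rcases p with _ | p'
    · -- p = 0, so q ≥ 1 : [2,1] at the junction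
      obtain ⟨q', rfl⟩ : ∃ q', q = q' + 1 := ⟨q - 1, by omega⟩
      refine Or.inr (Or.inl ⟨1 :: replicate q' 2, replicate (q' + 1) 2, ?_⟩)
      simp [List.replicate_succ']
    · -- p = p' + 1 : [2,1] inside x
      refine Or.inr (Or.inl (List.IsInfix.trans
        ⟨replicate p' 2, replicate q 2, ?_⟩ (List.prefix_append _ _).isInfix))
      simp [List.replicate_succ']
  · -- filter = [0,1]
    obtain ⟨p, m, q, rfl⟩ := decomp2 h
    rcases m with _ | m'
    · -- m = 0
      simp only [List.replicate_zero, List.nil_append]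
      rcases Nat.lt_or_ge (p + q) 4 with hlt | hge
      · -- small cases: all concrete
        have hp : p < 4 := by omega
        have hq : q < 4 := by omega
        interval_cases p <;> interval_cases q <;> decide
      · -- p + q ≥ 4 : [2,2,2,2] in the middle
        refine Or.inr (Or.inr (Or.inr (Or.inr (Or.inr (Or.inl
          ⟨replicate p 2 ++ [0, 1], replicate (q + p - 4) 2 ++ 0 :: 1 :: replicate q 2, ?_⟩)))))
        have base : replicate q (2 : Fin 3) ++ replicate p 2
            = 2 :: 2 :: 2 :: 2 :: replicate (q + p - 4) 2 := by
          rw [← List.replicate_add,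
            show q + p = (q + p - 4) + 1 + 1 + 1 + 1 by omega]
          simp [List.replicate_succ]
        have this4 : ∀ W : List (Fin 3),
            replicate q (2 : Fin 3) ++ (replicate p 2 ++ W)
              = 2 :: 2 :: 2 :: 2 :: (replicate (q + p - 4) 2 ++ W) := by
          intro W
          rw [← List.append_assoc, base]
          simp
        simp only [List.append_assoc, List.cons_append, List.nil_append]
        rw [this4 (0 :: 1 :: replicate q 2)]
    · -- m ≥ 1 : [0,2] inside x
      refine Or.inr (Or.inr (Or.inl (List.IsInfix.trans
        ⟨replicate p 2, replicate m' 2 ++ 1 :: replicate q 2, ?_⟩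
        (List.prefix_append _ _).isInfix)))
      simp [List.replicate_succ]

end SqAux5

/-- If the only square factors of the binary word `f` are `00`, `11` and `0101`,
then the word `g` obtained from `f` by replacing each `10` by `12220` contains
no square `XX` with `|X| ≥ 2`. -/
theorem stmt7 (f : ℕ → Fin 2)
    (hsq : ∀ X : List (Fin 2), X ≠ [] → IsFactor (X ++ X) f →
      X = [0] ∨ X = [1] ∨ X = [0, 1])
    (X : List (Fin 3)) (hX : 2 ≤ X.length) :
    ¬ ∃ n, (X ++ X) <:+: gPrefix f n := by
  rintro ⟨n, hinf⟩
  have hfilt : (X.filter SqAux4.pnz) ++ (X.filter SqAux4.pnz) <:+: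
      (List.range n).map (fun k => SqAux.g2 (f k)) := by
    have h := hinf.filter SqAux4.pnz
    rw [SqAux4.filter_gPrefix, List.filter_append] at h
    exact h
  have hY : X.filter SqAux4.pnz = [] ∨ X.filter SqAux4.pnz = [0] ∨
      X.filter SqAux4.pnz = [1] ∨ X.filter SqAux4.pnz = [0, 1] := by
    rcases eq_or_ne (X.filter SqAux4.pnz) [] with he | hne
    · exact Or.inl he
    · obtain ⟨Z, hZ, hfac⟩ := SqAux4.reflect f hfilt
      have hZne : Z ≠ [] := by
        intro h
        rw [h] at hZ
        exact hne hZ.symm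
      rcases hsq Z hZne hfac with rfl | rfl | rfl
      · refine Or.inr (Or.inl ?_)
        rw [← hZ]; decide
      · refine Or.inr (Or.inr (Or.inl ?_))
        rw [← hZ]; decide
      · refine Or.inr (Or.inr (Or.inr ?_))
        rw [← hZ]; decide
  rcases SqAux5.combinat hX hY with h | h | h | h | h | h | h
  · obtain ⟨i, hi⟩ := SqAux4.infix_G f (h.trans hinf)
    exact SqAux3.no_10 f (by simpa using (hi 0 (by decide)).symm)
      (by simpa using (hi 1 (by decide)).symm)
  · obtain ⟨i, hi⟩ := SqAux4.infix_G f (h.trans hinf)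
    exact SqAux3.no_21 f (by simpa using (hi 0 (by decide)).symm)
      (by simpa using (hi 1 (by decide)).symm)
  · obtain ⟨i, hi⟩ := SqAux4.infix_G f (h.trans hinf)
    exact SqAux3.no_02 f (by simpa using (hi 0 (by decide)).symm)
      (by simpa using (hi 1 (by decide)).symm)
  · obtain ⟨i, hi⟩ := SqAux4.infix_G f (h.trans hinf)
    exact SqAux3.no_120 f (by simpa using (hi 0 (by decide)).symm)
      (by simpa using (hi 1 (by decide)).symm)
      (by simpa using (hi 2 (by decide)).symm)
  · obtain ⟨i, hi⟩ := SqAux4.infix_G f (h.trans hinf)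
    exact SqAux3.no_1220 f (by simpa using (hi 0 (by decide)).symm)
      (by simpa using (hi 1 (by decide)).symm)
      (by simpa using (hi 2 (by decide)).symm)
      (by simpa using (hi 3 (by decide)).symm)
  · obtain ⟨i, hi⟩ := SqAux4.infix_G f (h.trans hinf)
    exact SqAux3.no_2222 f (by simpa using (hi 0 (by decide)).symm)
      (by simpa using (hi 1 (by decide)).symm)
      (by simpa using (hi 2 (by decide)).symm)
      (by simpa using (hi 3 (by decide)).symm)
  · obtain ⟨i, hi⟩ := SqAux4.infix_G f (h.trans hinf)
    exact SqAux3.no_2012 f hsq (by simpa using (hi 0 (by decide)).symm)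
      (by simpa using (hi 1 (by decide)).symm)
      (by simpa using (hi 2 (by decide)).symm)
      (by simpa using (hi 3 (by decide)).symm)
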